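/- Let Y be a binomial random variable B(n, p) with ζ ≤ p ≤ 1 − ζ for 0 < ζ < 1/2 and n ≥ 1. Then Pr[Y = ⌊np⌋] ≤ (e/(2π))·(1/(ζ√n)). -/

import Mathlib

open Real Nat

set_option maxHeartbeats 4000000

lemma sqrtpi_le_stirlingSeq {m : ℕ} (hm : 1 ≤ m) : Real.sqrt Real.pi ≤ Stirling.stirlingSeq m := by
  obtain ⟨j, rfl⟩ : ∃ j, m = j + 1 := ⟨m - 1, (Nat.succ_pred_eq_of_pos hm).symm⟩
  have h := Stirling.stirlingSeq'_antitone.le_of_tendsto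
    (Stirling.tendsto_stirlingSeq_sqrt_pi.comp (Filter.tendsto_add_atTop_nat 1)) j
  simpa using h

lemma stirlingSeq_le_e {m : ℕ} (hm : 1 ≤ m) : Stirling.stirlingSeq m ≤ Real.exp 1 / Real.sqrt 2 := by
  obtain ⟨j, rfl⟩ : ∃ j, m = j + 1 := ⟨m - 1, (Nat.succ_pred_eq_of_pos hm).symm⟩
  have h := Stirling.stirlingSeq'_antitone (Nat.zero_le j)
  simpa [Stirling.stirlingSeq_one] using h

lemma fact_upper {m : ℕ} (hm : 1 ≤ m) :
    (m ! : ℝ) ≤ Real.exp 1 * Real.sqrt m * ((m : ℝ) / Real.exp 1) ^ m := by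
  have h := stirlingSeq_le_e hm
  have hpos : (0:ℝ) < Real.sqrt (2 * m) * ((m : ℝ) / Real.exp 1) ^ m := by
    have : (0:ℝ) < (m:ℝ) := by exact_mod_cast hm
    positivity
  rw [Stirling.stirlingSeq, div_le_iff₀ hpos] at h
  calc (m ! : ℝ) ≤ Real.exp 1 / Real.sqrt 2 * (Real.sqrt (2 * m) * ((m : ℝ) / Real.exp 1) ^ m) := h
    _ = Real.exp 1 * Real.sqrt m * ((m : ℝ) / Real.exp 1) ^ m := by
        rw [show (2 * m : ℝ) = 2 * m by norm_num, Real.sqrt_mul (by norm_num : (0:ℝ) ≤ 2)]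
        have h2 : Real.sqrt 2 ≠ 0 := by positivity
        field_simp

lemma fact_lower {m : ℕ} (hm : 1 ≤ m) :
    Real.sqrt (2 * Real.pi) * Real.sqrt m * ((m : ℝ) / Real.exp 1) ^ m ≤ (m ! : ℝ) := by
  have h := sqrtpi_le_stirlingSeq hm
  have hpos : (0:ℝ) < Real.sqrt (2 * m) * ((m : ℝ) / Real.exp 1) ^ m := by
    have : (0:ℝ) < (m:ℝ) := by exact_mod_cast hm
    positivity
  rw [Stirling.stirlingSeq, le_div_iff₀ hpos] at h
  calc Real.sqrt (2 * Real.pi) * Real.sqrt m * ((m : ℝ) / Real.exp 1) ^ m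
      = Real.sqrt Real.pi * (Real.sqrt (2 * m) * ((m : ℝ) / Real.exp 1) ^ m) := by
        rw [Real.sqrt_mul (by norm_num : (0:ℝ) ≤ 2), Real.sqrt_mul (by norm_num : (0:ℝ) ≤ 2)]
        ring
    _ ≤ (m ! : ℝ) := h
lemma pow_amgm {u v : ℝ} (hu : 0 ≤ u) (hv : 0 ≤ v) {k b n : ℕ} (hkb : k + b = n)
    (hn : 0 < n) : u ^ k * v ^ b ≤ ((k * u + b * v) / n) ^ n := by
  have hN : (0:ℝ) < n := by exact_mod_cast hn
  have hw : (k : ℝ) / n + (b : ℝ) / n = 1 := by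
    field_simp
    exact_mod_cast hkb
  have h := Real.geom_mean_le_arith_mean2_weighted
    (by positivity : (0:ℝ) ≤ (k:ℝ)/n) (by positivity : (0:ℝ) ≤ (b:ℝ)/n) hu hv hw
  have h2 := pow_le_pow_left₀ (by positivity) h n
  calc u ^ k * v ^ b = (u ^ ((k:ℝ)/n) * v ^ ((b:ℝ)/n)) ^ n := by
        rw [mul_pow, ← Real.rpow_natCast (u ^ ((k:ℝ)/n)) n, ← Real.rpow_natCast (v ^ ((b:ℝ)/n)) n,
          ← Real.rpow_mul hu, ← Real.rpow_mul hv, div_mul_cancel₀, div_mul_cancel₀]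
        · rw [Real.rpow_natCast, Real.rpow_natCast]
        · exact ne_of_gt hN
        · exact ne_of_gt hN
    _ ≤ ((k:ℝ)/n * u + (b:ℝ)/n * v) ^ n := h2
    _ = ((k * u + b * v) / n) ^ n := by ring_nf

lemma pinsker {x z : ℝ} (hx0 : 0 < x) (hxz : x ≤ z) (hz1 : z < 1) :
    2 * (z - x) ^ 2 ≤ x * Real.log (x / z) + (1 - x) * Real.log ((1 - x) / (1 - z)) := by
  rcases eq_or_lt_of_le hxz with rfl | hlt
  · simp [div_self (ne_of_gt hx0), div_self (ne_of_gt (by linarith : (0:ℝ) < 1 - x))]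
  · set g : ℝ → ℝ := fun t => x * Real.log t + (1 - x) * Real.log (1 - t) + 2 * (t - x) ^ 2 with hg
    have hx1 : x < 1 := lt_of_le_of_lt hxz hz1
    have hderiv : ∀ t ∈ Set.Ioo x z, HasDerivAt g (x / t - (1 - x) / (1 - t) + 4 * (t - x)) t := by
      intro t ht
      have ht0 : (0:ℝ) < t := lt_trans hx0 ht.1
      have ht1 : t < 1 := lt_trans ht.2 hz1
      have h1 : HasDerivAt (fun t : ℝ => x * Real.log t) (x * t⁻¹) t :=
        (Real.hasDerivAt_log (ne_of_gt ht0)).const_mul x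
      have h2 : HasDerivAt (fun t : ℝ => (1 - t)) (-1) t := by
        simpa using (hasDerivAt_id t).const_sub 1
      have h3 : HasDerivAt (fun t : ℝ => Real.log (1 - t)) ((1 - t)⁻¹ * (-1)) t :=
        (Real.hasDerivAt_log (by linarith : (1:ℝ) - t ≠ 0)).comp t h2
      have h4 : HasDerivAt (fun t : ℝ => (1 - x) * Real.log (1 - t)) ((1 - x) * ((1 - t)⁻¹ * (-1))) t :=
        h3.const_mul (1 - x)
      have h5 : HasDerivAt (fun t : ℝ => (t - x) ^ 2) (2 * (t - x) ^ 1 * 1) t :=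
        ((hasDerivAt_id t).sub_const x).pow 2
      have h6 : HasDerivAt (fun t : ℝ => 2 * (t - x) ^ 2) (2 * (2 * (t - x) ^ 1 * 1)) t :=
        h5.const_mul 2
      have := (h1.add h4).add h6
      have htne : t ≠ 0 := ne_of_gt ht0
      have ht1ne : (1:ℝ) - t ≠ 0 := by linarith
      exact this.congr_deriv (by ring)
    have hcont : ContinuousOn g (Set.Icc x z) := by
      have hl1 : ContinuousOn (fun t : ℝ => Real.log t) (Set.Icc x z) :=
        Real.continuousOn_log.mono (fun t ht => by
          simp only [Set.mem_compl_iff, Set.mem_singleton_iff]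
          have : (0:ℝ) < t := lt_of_lt_of_le hx0 ht.1
          exact ne_of_gt this)
      have hl2 : ContinuousOn (fun t : ℝ => Real.log (1 - t)) (Set.Icc x z) := by
        apply Real.continuousOn_log.comp (continuous_const.sub continuous_id).continuousOn
        intro t ht
        simp only [Set.mem_compl_iff, Set.mem_singleton_iff]
        have : t < 1 := lt_of_le_of_lt ht.2 hz1
        have : (0:ℝ) < 1 - t := by linarith
        exact ne_of_gt this
      exact ((continuousOn_const.mul hl1).add (continuousOn_const.mul hl2)).add
        (continuousOn_const.mul (((continuous_id.sub continuous_const).pow 2).continuousOn))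
    obtain ⟨c, hc, hceq⟩ := exists_hasDerivAt_eq_slope g
      (fun t => x / t - (1 - x) / (1 - t) + 4 * (t - x)) hlt hcont hderiv
    have hc0 : (0:ℝ) < c := lt_trans hx0 hc.1
    have hc1 : c < 1 := lt_trans hc.2 hz1
    have hd0 : x / c - (1 - x) / (1 - c) + 4 * (c - x) ≤ 0 := by
      have hmul : (x / c - (1 - x) / (1 - c) + 4 * (c - x)) * (c * (1 - c)) ≤ 0 := by
        have hc1ne : (1:ℝ) - c ≠ 0 := by linarith
        have hc0ne : c ≠ 0 := ne_of_gt hc0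
        have e : (x / c - (1 - x) / (1 - c) + 4 * (c - x)) * (c * (1 - c))
            = -((c - x) * (1 - 2*c)^2) := by
          field_simp
          ring
        rw [e]
        have : 0 ≤ (c - x) * (1 - 2*c)^2 :=
          mul_nonneg (by linarith [hc.1] : (0:ℝ) ≤ c - x) (sq_nonneg _)
        linarith
      nlinarith [mul_pos hc0 (by linarith : (0:ℝ) < 1 - c)]
    have hslope : (g z - g x) / (z - x) ≤ 0 := hceq ▸ hd0
    have hgz : g z ≤ g x := by
      have := (div_nonpos_iff.mp hslope)
      rcases this with ⟨h1, h2⟩ | ⟨h1, h2⟩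
      · linarith
      · linarith [hlt, h2]
    simp only [hg] at hgz
    rw [Real.log_div (ne_of_gt hx0) (ne_of_gt (lt_trans hx0 hlt)),
      Real.log_div (by linarith : (1:ℝ) - x ≠ 0) (by linarith : (1:ℝ) - z ≠ 0)]
    nlinarith [hgz]

lemma keyquad {N x d : ℝ} (hN : 1 ≤ N) (hx : 1 ≤ N * x) (hd : 0 < d) (hhalf : x + d ≤ 1/2) :
    (x + d) ^ 2 ≤ x * (1 - x) * (1 + 4 * N * d ^ 2) := by
  have hx0 : 0 < x := by nlinarith
  have h1 : x * (1 - 2*x) ≥ 2 * x * d := by nlinarith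
  have h3 : 1/2 ≤ N * x * (1 - x) := by
    nlinarith [mul_nonneg (by linarith : (0:ℝ) ≤ N*x-1) (by linarith : (0:ℝ) ≤ 1 - x)]
  have h2 : 4 * N * d^2 * (x * (1-x)) ≥ 2 * d^2 := by
    nlinarith [mul_nonneg (sq_nonneg d) (by linarith : (0:ℝ) ≤ N*x*(1-x) - 1/2)]
  nlinarith [h1, h2]
/-- Key real inequality, with opaque reals K B N standing for casts. -/
lemma key_real {k b n : ℕ} {K B N p ζ : ℝ} (hkb : k + b = n) (hn : 0 < n)
    (hK : K = (k:ℝ)) (hB : B = (b:ℝ)) (hNdef : N = (n:ℝ))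
    (hK1 : 1 ≤ K) (hB1 : 1 ≤ B)
    (hζ0 : 0 < ζ) (hζ : ζ < 1/2) (hpl : ζ ≤ p) (hpu : p ≤ 1 - ζ)
    (hkp : K ≤ N * p) :
    (ζ * N * ((N * p / K) ^ k * (N * (1 - p) / B) ^ b)) ^ 2 ≤ K * B := by
  have hKB : K + B = N := by rw [hK, hB, hNdef]; exact_mod_cast hkb
  have hN1 : (1:ℝ) ≤ N := by linarith
  have hN0 : (0:ℝ) < N := by linarith
  have hK0 : (0:ℝ) < K := by linarith
  have hB0 : (0:ℝ) < B := by linarith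
  have hp0 : 0 < p := lt_of_lt_of_le hζ0 hpl
  have hq0 : 0 < 1 - p := lt_of_lt_of_le hζ0 (by linarith)
  have hζ1 : ζ < 1 := by linarith
  have h1ζ : (0:ℝ) < 1 - ζ := by linarith
  have hBζ : ζ * N ≤ B := by nlinarith
  obtain ⟨T, hT⟩ : ∃ T, T = (N * p / K) ^ k * (N * (1 - p) / B) ^ b := ⟨_, rfl⟩
  rw [← hT]
  have hT0 : 0 ≤ T := by rw [hT]; positivity
  rcases le_or_gt (ζ * N) K with hcase | hcase
  · -- good case
    have hsum : ((k:ℝ) * (N * p / K) + (b:ℝ) * (N * (1 - p) / B)) / N = 1 := by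
      rw [← hK, ← hB]
      field_simp
      nlinarith [hKB]
    have hT1 : T ≤ 1 := by
      have h := pow_amgm (u := N * p / K) (v := N * (1 - p) / B)
        (by positivity) (by positivity) hkb hn
      rw [← hNdef, hsum, one_pow] at h
      rw [hT]; exact h
    have hKB2 : ζ * N * (ζ * N) ≤ K * B :=
      mul_le_mul hcase hBζ (by positivity) (by positivity)
    have hT2 : T ^ 2 ≤ 1 := by nlinarith
    calc (ζ * N * T) ^ 2 = (ζ * N) ^ 2 * T ^ 2 := by ring
      _ ≤ (ζ * N) ^ 2 * 1 := mul_le_mul_of_nonneg_left hT2 (sq_nonneg _)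
      _ ≤ K * B := by nlinarith
  · -- bad case
    obtain ⟨x, hx⟩ : ∃ x : ℝ, x = K / N := ⟨_, rfl⟩
    obtain ⟨δ, hδ⟩ : ∃ d : ℝ, d = ζ - x := ⟨_, rfl⟩
    have hx0 : 0 < x := by rw [hx]; positivity
    have hxζ : x < ζ := by rw [hx, div_lt_iff₀ hN0]; linarith
    have hδ0 : 0 < δ := by rw [hδ]; linarith
    have hNx : N * x = K := by rw [hx]; field_simp
    have hNx1 : N * (1 - x) = B := by nlinarith [hNx]
    have hx1 : x < 1 := by linarith
    have hRinner : ((k:ℝ) * (p / ζ) + (b:ℝ) * ((1 - p) / (1 - ζ))) / N ≤ 1 := by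
      rw [← hK, ← hB, div_le_one hN0]
      have hh : K * p / ζ + B * (1 - p) / (1 - ζ) ≤ N := by
        rw [div_add_div _ _ (ne_of_gt hζ0) (ne_of_gt h1ζ), div_le_iff₀ (by positivity)]
        have hB' : B = N - K := by linarith
        rw [hB']
        nlinarith [mul_nonneg (sub_nonneg.2 hpl) (by linarith : (0:ℝ) ≤ ζ * N - K)]
      calc K * (p / ζ) + B * ((1 - p) / (1 - ζ)) = K * p / ζ + B * (1 - p) / (1 - ζ) := by ring
        _ ≤ N := hh
    have hR1 : (p / ζ) ^ k * ((1 - p) / (1 - ζ)) ^ b ≤ 1 := by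
      have h := pow_amgm (u := p / ζ) (v := (1 - p) / (1 - ζ))
        (by positivity) (by positivity) hkb hn
      rw [← hNdef] at h
      calc (p / ζ) ^ k * ((1 - p) / (1 - ζ)) ^ b
          ≤ (((k:ℝ) * (p / ζ) + (b:ℝ) * ((1 - p) / (1 - ζ))) / N) ^ n := h
        _ ≤ 1 ^ n := pow_le_pow_left₀ (by positivity) hRinner n
        _ = 1 := one_pow n
    obtain ⟨Tζ, hTζ⟩ : ∃ t : ℝ, t = (N * ζ / K) ^ k * (N * (1 - ζ) / B) ^ b := ⟨_, rfl⟩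
    have hTζ0 : 0 ≤ Tζ := by rw [hTζ]; positivity
    have hTfact : T = Tζ * ((p / ζ) ^ k * ((1 - p) / (1 - ζ)) ^ b) := by
      rw [hT, hTζ]
      rw [show (N * ζ / K) ^ k * (N * (1 - ζ) / B) ^ b * ((p / ζ) ^ k * ((1 - p) / (1 - ζ)) ^ b)
          = ((N * ζ / K) * (p / ζ)) ^ k * ((N * (1 - ζ) / B) * ((1 - p) / (1 - ζ))) ^ b by
        rw [mul_pow, mul_pow]; ring]
      congr 2
      · field_simp
      · field_simp
    have hTTζ : T ≤ Tζ := by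
      rw [hTfact]
      exact mul_le_of_le_one_right hTζ0 hR1
    obtain ⟨E, hE⟩ : ∃ e : ℝ, e = (K / (N * ζ)) ^ (2 * k) * (B / (N * (1 - ζ))) ^ (2 * b) := ⟨_, rfl⟩
    have hE0 : 0 < E := by rw [hE]; positivity
    have hETζ : E * Tζ ^ 2 = 1 := by
      rw [hE, hTζ, mul_pow, ← pow_mul, ← pow_mul, mul_comm k 2, mul_comm b 2]
      rw [show (K / (N * ζ)) ^ (2 * k) * (B / (N * (1 - ζ))) ^ (2 * b) *
          ((N * ζ / K) ^ (2 * k) * (N * (1 - ζ) / B) ^ (2 * b))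
          = ((K / (N * ζ)) * (N * ζ / K)) ^ (2 * k) *
            ((B / (N * (1 - ζ))) * (N * (1 - ζ) / B)) ^ (2 * b) by
        rw [mul_pow, mul_pow]; ring]
      rw [div_mul_div_cancel₀, div_mul_div_cancel₀]
      · rw [div_self (ne_of_gt hK0), div_self (ne_of_gt hB0)]
        norm_num
      · positivity
      · positivity
    have hlogE : Real.log E = 2 * N * (x * Real.log (x / ζ)
        + (1 - x) * Real.log ((1 - x) / (1 - ζ))) := by
      rw [hE, Real.log_mul (by positivity) (by positivity), Real.log_pow, Real.log_pow]
      have e1 : K / (N * ζ) = x / ζ := by rw [← hNx]; field_simp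
      have e2 : B / (N * (1 - ζ)) = (1 - x) / (1 - ζ) := by rw [← hNx1]; field_simp
      rw [e1, e2]
      have e3 : ((2 * k : ℕ) : ℝ) = 2 * N * x := by push_cast; rw [← hK]; nlinarith [hNx]
      have e4 : ((2 * b : ℕ) : ℝ) = 2 * N * (1 - x) := by push_cast; rw [← hB]; nlinarith [hNx1]
      rw [e3, e4]; ring
    have hEge : 1 + 4 * N * δ ^ 2 ≤ E := by
      have hp1 := pinsker hx0 (le_of_lt hxζ) hζ1
      have hlog_ge : 4 * N * δ ^ 2 ≤ Real.log E := by
        rw [hlogE, hδ]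
        nlinarith [hp1, hN0]
      have := Real.add_one_le_exp (4 * N * δ ^ 2)
      calc 1 + 4 * N * δ ^ 2 ≤ Real.exp (4 * N * δ ^ 2) := by linarith
        _ ≤ Real.exp (Real.log E) := Real.exp_le_exp.mpr hlog_ge
        _ = E := Real.exp_log hE0
    have hquad : (ζ * N) ^ 2 ≤ K * B * (1 + 4 * N * δ ^ 2) := by
      have h := keyquad hN1 (by rw [hNx]; exact hK1) hδ0 (by rw [hδ]; linarith)
      have h2 : (x + δ) ^ 2 * N ^ 2 ≤ x * (1 - x) * (1 + 4 * N * δ ^ 2) * N ^ 2 :=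
        mul_le_mul_of_nonneg_right h (sq_nonneg N)
      calc (ζ * N) ^ 2 = (x + δ) ^ 2 * N ^ 2 := by rw [hδ]; ring
        _ ≤ x * (1 - x) * (1 + 4 * N * δ ^ 2) * N ^ 2 := h2
        _ = (N * x) * (N * (1 - x)) * (1 + 4 * N * δ ^ 2) := by ring
        _ = K * B * (1 + 4 * N * δ ^ 2) := by rw [hNx, hNx1]
    have hfinal : (ζ * N * Tζ) ^ 2 ≤ K * B := by
      calc (ζ * N * Tζ) ^ 2 = (ζ * N) ^ 2 * Tζ ^ 2 := by ring
        _ ≤ (K * B * E) * Tζ ^ 2 := by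
            apply mul_le_mul_of_nonneg_right _ (sq_nonneg Tζ)
            calc (ζ * N) ^ 2 ≤ K * B * (1 + 4 * N * δ ^ 2) := hquad
              _ ≤ K * B * E := by nlinarith [hEge, mul_pos hK0 hB0]
        _ = K * B * (E * Tζ ^ 2) := by ring
        _ = K * B := by rw [hETζ]; ring
    calc (ζ * N * T) ^ 2 ≤ (ζ * N * Tζ) ^ 2 := by
          apply pow_le_pow_left₀ (by positivity)
          exact mul_le_mul_of_nonneg_left hTTζ (by positivity)
      _ ≤ K * B := hfinal
lemma main_case {n k b : ℕ} {p ζ : ℝ} (hkb : k + b = n) (hk1 : 1 ≤ k) (hb1 : 1 ≤ b)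
    (hζ0 : 0 < ζ) (hζ : ζ < 1/2) (hpl : ζ ≤ p) (hpu : p ≤ 1 - ζ)
    (hkp : (k:ℝ) ≤ (n:ℝ) * p) :
    (n.choose k : ℝ) * p ^ k * (1 - p) ^ b * (ζ * Real.sqrt n)
      ≤ Real.exp 1 / (2 * Real.pi) := by
  subst hkb
  obtain ⟨N, hNdef⟩ : ∃ N : ℝ, N = ((k + b : ℕ) : ℝ) := ⟨_, rfl⟩
  obtain ⟨K, hK⟩ : ∃ K : ℝ, K = (k : ℝ) := ⟨_, rfl⟩
  obtain ⟨B, hB⟩ : ∃ B : ℝ, B = (b : ℝ) := ⟨_, rfl⟩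
  have hK1 : (1:ℝ) ≤ K := by rw [hK]; exact_mod_cast hk1
  have hB1 : (1:ℝ) ≤ B := by rw [hB]; exact_mod_cast hb1
  have hKB : K + B = N := by rw [hK, hB, hNdef]; push_cast; ring
  have hN1 : (1:ℝ) ≤ N := by linarith
  have hN0 : (0:ℝ) < N := by linarith
  have hK0 : (0:ℝ) < K := by linarith
  have hB0 : (0:ℝ) < B := by linarith
  have hp0 : 0 < p := lt_of_lt_of_le hζ0 hpl
  have hq0 : 0 < 1 - p := lt_of_lt_of_le hζ0 (by linarith)
  have hπ : (0:ℝ) < Real.pi := Real.pi_pos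
  have he0 : (0:ℝ) < Real.exp 1 := Real.exp_pos 1
  have hkp' : K ≤ N * p := by rw [hK, hNdef]; exact_mod_cast hkp
  -- key inequality
  have hkey := key_real rfl (by omega) hK hB hNdef hK1 hB1 hζ0 hζ hpl hpu hkp'
  have hkey1 : ζ * N * ((N * p / K) ^ k * (N * (1 - p) / B) ^ b)
      ≤ Real.sqrt K * Real.sqrt B := by
    rw [← Real.sqrt_mul (le_of_lt hK0)]
    rw [Real.le_sqrt (by positivity) (by positivity)]
    exact hkey
  have hkey2 : ζ * N * ((N * p) ^ k * (N * (1 - p)) ^ b)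
      ≤ Real.sqrt K * Real.sqrt B * (K ^ k * B ^ b) := by
    have h := mul_le_mul_of_nonneg_right hkey1 (by positivity : (0:ℝ) ≤ K ^ k * B ^ b)
    calc ζ * N * ((N * p) ^ k * (N * (1 - p)) ^ b)
        = ζ * N * ((N * p / K) ^ k * (N * (1 - p) / B) ^ b) * (K ^ k * B ^ b) := by
          rw [div_pow, div_pow]
          field_simp
      _ ≤ Real.sqrt K * Real.sqrt B * (K ^ k * B ^ b) := h
  -- factorial bounds
  have hup := fact_upper (show 1 ≤ k + b by omega)
  have hlok := fact_lower hk1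
  have hlob := fact_lower hb1
  rw [← hK] at hlok
  rw [← hB] at hlob
  rw [← hNdef] at hup
  -- choose bound
  have hfac0k : (0:ℝ) < Real.sqrt (2 * Real.pi) * Real.sqrt K * (K / Real.exp 1) ^ k := by
    positivity
  have hfac0b : (0:ℝ) < Real.sqrt (2 * Real.pi) * Real.sqrt B * (B / Real.exp 1) ^ b := by
    positivity
  have hchoosenat := Nat.choose_mul_factorial_mul_factorial (Nat.le_add_right k b)
  rw [Nat.add_sub_cancel_left] at hchoosenat
  have hchoose : ((k + b).choose k : ℝ) * (k ! : ℝ) * (b ! : ℝ) = ((k + b)! : ℝ) := by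
    exact_mod_cast congrArg (Nat.cast : ℕ → ℝ) hchoosenat
  have hchoose_eq : ((k + b).choose k : ℝ) = ((k + b)! : ℝ) / ((k ! : ℝ) * (b ! : ℝ)) := by
    rw [eq_div_iff (by positivity)]
    rw [← hchoose]; ring
  have hchoose_le : ((k + b).choose k : ℝ)
      ≤ (Real.exp 1 * Real.sqrt N * (N / Real.exp 1) ^ (k + b)) /
        ((Real.sqrt (2 * Real.pi) * Real.sqrt K * (K / Real.exp 1) ^ k) *
         (Real.sqrt (2 * Real.pi) * Real.sqrt B * (B / Real.exp 1) ^ b)) := by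
    rw [hchoose_eq]
    apply div_le_div₀ (by positivity) hup (by positivity)
    exact mul_le_mul hlok hlob (le_of_lt hfac0b) (by positivity)
  -- bridge
  have hbridge : (Real.exp 1 * Real.sqrt N * (N / Real.exp 1) ^ (k + b)) *
      (p ^ k * (1 - p) ^ b * (ζ * Real.sqrt N))
      ≤ (Real.exp 1 / (2 * Real.pi)) *
        ((Real.sqrt (2 * Real.pi) * Real.sqrt K * (K / Real.exp 1) ^ k) *
         (Real.sqrt (2 * Real.pi) * Real.sqrt B * (B / Real.exp 1) ^ b)) := by
    have hssN : Real.sqrt N * Real.sqrt N = N := Real.mul_self_sqrt (le_of_lt hN0)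
    have hss2π : Real.sqrt (2 * Real.pi) * Real.sqrt (2 * Real.pi) = 2 * Real.pi :=
      Real.mul_self_sqrt (by positivity)
    obtain ⟨S, hS⟩ : ∃ S : ℝ, S = Real.sqrt N := ⟨_, rfl⟩
    have hssS : S * S = N := by rw [hS]; exact hssN
    have eL : (Real.exp 1 * Real.sqrt N * (N / Real.exp 1) ^ (k + b)) *
        (p ^ k * (1 - p) ^ b * (ζ * Real.sqrt N))
        = (Real.exp 1 / Real.exp 1 ^ (k + b)) * (Real.sqrt N * Real.sqrt N) *
          (ζ * ((N * p) ^ k * (N * (1 - p)) ^ b)) := by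
      rw [mul_pow N p, mul_pow N (1 - p), div_pow, pow_add N k b, pow_add (Real.exp 1) k b]
      ring
    have eR : (Real.exp 1 / (2 * Real.pi)) *
        ((Real.sqrt (2 * Real.pi) * Real.sqrt K * (K / Real.exp 1) ^ k) *
         (Real.sqrt (2 * Real.pi) * Real.sqrt B * (B / Real.exp 1) ^ b))
        = (Real.exp 1 / Real.exp 1 ^ (k + b)) *
          ((Real.sqrt (2 * Real.pi) * Real.sqrt (2 * Real.pi)) / (2 * Real.pi)) *
          (Real.sqrt K * Real.sqrt B * (K ^ k * B ^ b)) := by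
      rw [div_pow, div_pow, pow_add]
      field_simp
    rw [eL, eR, hssN, hss2π, div_self (by positivity : (2:ℝ) * Real.pi ≠ 0)]
    have hfac : (0:ℝ) ≤ Real.exp 1 / Real.exp 1 ^ (k + b) := by positivity
    calc (Real.exp 1 / Real.exp 1 ^ (k + b)) * N * (ζ * ((N * p) ^ k * (N * (1 - p)) ^ b))
        = (Real.exp 1 / Real.exp 1 ^ (k + b)) * (ζ * N * ((N * p) ^ k * (N * (1 - p)) ^ b)) := by
          ring
      _ ≤ (Real.exp 1 / Real.exp 1 ^ (k + b)) *
          (Real.sqrt K * Real.sqrt B * (K ^ k * B ^ b)) :=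
          mul_le_mul_of_nonneg_left hkey2 hfac
      _ = (Real.exp 1 / Real.exp 1 ^ (k + b)) * 1 *
          (Real.sqrt K * Real.sqrt B * (K ^ k * B ^ b)) := by ring
  -- assemble
  rw [← hNdef]
  have hstep : ((k + b).choose k : ℝ) * p ^ k * (1 - p) ^ b * (ζ * Real.sqrt N)
      = ((k + b).choose k : ℝ) * (p ^ k * (1 - p) ^ b * (ζ * Real.sqrt N)) := by ring
  rw [hstep]
  calc ((k + b).choose k : ℝ) * (p ^ k * (1 - p) ^ b * (ζ * Real.sqrt N))
      ≤ ((Real.exp 1 * Real.sqrt N * (N / Real.exp 1) ^ (k + b)) /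
        ((Real.sqrt (2 * Real.pi) * Real.sqrt K * (K / Real.exp 1) ^ k) *
         (Real.sqrt (2 * Real.pi) * Real.sqrt B * (B / Real.exp 1) ^ b))) *
        (p ^ k * (1 - p) ^ b * (ζ * Real.sqrt N)) :=
        mul_le_mul_of_nonneg_right hchoose_le (by positivity)
    _ = ((Real.exp 1 * Real.sqrt N * (N / Real.exp 1) ^ (k + b)) *
        (p ^ k * (1 - p) ^ b * (ζ * Real.sqrt N))) /
        ((Real.sqrt (2 * Real.pi) * Real.sqrt K * (K / Real.exp 1) ^ k) *
         (Real.sqrt (2 * Real.pi) * Real.sqrt B * (B / Real.exp 1) ^ b)) := by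
        rw [div_mul_eq_mul_div]
    _ ≤ Real.exp 1 / (2 * Real.pi) := by
        rw [div_le_iff₀ (by positivity)]
        exact hbridge

noncomputable def binomProb (n : ℕ) (p : ℝ) (k : ℕ) : ℝ :=
  (n.choose k : ℝ) * p ^ k * (1 - p) ^ (n - k)

theorem stmt5 (n : ℕ) (hn : 1 ≤ n) (ζ p : ℝ) (hζ0 : 0 < ζ) (hζ : ζ < 1 / 2)
    (hpl : ζ ≤ p) (hpu : p ≤ 1 - ζ) :
    binomProb n p ⌊(n : ℝ) * p⌋₊ ≤
      (Real.exp 1 / (2 * Real.pi)) * (1 / (ζ * Real.sqrt n)) := by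
  have hp0 : 0 < p := lt_of_lt_of_le hζ0 hpl
  have hq0 : 0 < 1 - p := lt_of_lt_of_le hζ0 (by linarith)
  have hN0 : (0:ℝ) < (n:ℝ) := by exact_mod_cast hn
  have hN1 : (1:ℝ) ≤ (n:ℝ) := by exact_mod_cast hn
  have hζn0 : 0 < ζ * Real.sqrt n := by positivity
  rw [mul_one_div, le_div_iff₀ hζn0]
  by_cases hk0 : ⌊(n : ℝ) * p⌋₊ = 0
  · rw [hk0]
    have hb : binomProb n p 0 = (1 - p) ^ n := by simp [binomProb]
    rw [hb]
    have hnp1 : (n:ℝ) * p < 1 := Nat.floor_eq_zero.mp hk0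
    have ht1 : (n:ℝ) * ζ < 1 := lt_of_le_of_lt (by nlinarith) hnp1
    have ht0 : 0 < (n:ℝ) * ζ := by positivity
    have hA : (1 - p) ^ n ≤ Real.exp (-((n:ℝ) * ζ)) := by
      calc (1 - p) ^ n ≤ (1 - ζ) ^ n := pow_le_pow_left₀ (le_of_lt hq0) (by linarith) n
        _ ≤ (Real.exp (-ζ)) ^ n := by
            apply pow_le_pow_left₀ (by linarith)
            nlinarith [Real.add_one_le_exp (-ζ)]
        _ = Real.exp (-((n:ℝ) * ζ)) := by
            rw [← Real.exp_nat_mul]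
            ring_nf
    apply le_of_pow_le_pow_left₀ two_ne_zero (by positivity)
    have hsq : Real.sqrt n ^ 2 = (n:ℝ) := Real.sq_sqrt (le_of_lt hN0)
    have htexp : ((n:ℝ) * ζ) * Real.exp (-((n:ℝ) * ζ)) ≤ Real.exp (-1) := by
      have h1 : (n:ℝ) * ζ ≤ Real.exp ((n:ℝ) * ζ - 1) := by
        have := Real.add_one_le_exp ((n:ℝ) * ζ - 1); linarith
      calc ((n:ℝ) * ζ) * Real.exp (-((n:ℝ) * ζ))
          ≤ Real.exp ((n:ℝ) * ζ - 1) * Real.exp (-((n:ℝ) * ζ)) :=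
            mul_le_mul_of_nonneg_right h1 (le_of_lt (Real.exp_pos _))
        _ = Real.exp (-1) := by rw [← Real.exp_add]; ring_nf
    have h2π : Real.exp (-1) ≤ Real.exp 1 / (2 * Real.pi) := by
      rw [le_div_iff₀ (by positivity), Real.exp_neg]
      rw [inv_mul_le_iff₀ (Real.exp_pos 1)]
      nlinarith [Real.exp_one_gt_d9, Real.pi_lt_d2, Real.pi_pos]
    have hA0 : (0:ℝ) ≤ (1 - p) ^ n := by positivity
    calc ((1 - p) ^ n * (ζ * Real.sqrt n)) ^ 2
        = ((1 - p) ^ n) ^ 2 * (ζ ^ 2 * Real.sqrt n ^ 2) := by ring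
      _ = ((1 - p) ^ n) ^ 2 * (ζ ^ 2 * (n:ℝ)) := by rw [hsq]
      _ ≤ (Real.exp (-((n:ℝ) * ζ))) ^ 2 * (ζ ^ 2 * (n:ℝ)) := by
          apply mul_le_mul_of_nonneg_right _ (by positivity)
          exact pow_le_pow_left₀ hA0 hA 2
      _ ≤ (Real.exp (-((n:ℝ) * ζ))) ^ 2 * (((n:ℝ) * ζ) ^ 2) := by
          apply mul_le_mul_of_nonneg_left _ (by positivity)
          nlinarith [sq_nonneg ζ]
      _ = (((n:ℝ) * ζ) * Real.exp (-((n:ℝ) * ζ))) ^ 2 := by ring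
      _ ≤ (Real.exp (-1)) ^ 2 := pow_le_pow_left₀ (by positivity) htexp 2
      _ ≤ (Real.exp 1 / (2 * Real.pi)) ^ 2 :=
          pow_le_pow_left₀ (le_of_lt (Real.exp_pos _)) h2π 2
  · have hk1 : 1 ≤ ⌊(n : ℝ) * p⌋₊ := Nat.one_le_iff_ne_zero.mpr hk0
    have hkle : ((⌊(n : ℝ) * p⌋₊ : ℕ) : ℝ) ≤ (n:ℝ) * p := Nat.floor_le (by positivity)
    have hklt : ⌊(n : ℝ) * p⌋₊ < n := by
      have h1 : ((⌊(n : ℝ) * p⌋₊ : ℕ) : ℝ) < (n:ℝ) := by nlinarith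
      exact_mod_cast h1
    have hkb : ⌊(n : ℝ) * p⌋₊ + (n - ⌊(n : ℝ) * p⌋₊) = n := by omega
    have hb1 : 1 ≤ n - ⌊(n : ℝ) * p⌋₊ := by omega
    have h := main_case hkb hk1 hb1 hζ0 hζ hpl hpu hkle
    exact h
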